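/- The number of virtual tribrackets on a three-element set is exactly 24; that is, the number of pairs (T, S) of functions Fin 3 → Fin 3 → Fin 3 → Fin 3, each of which is a Latin cube (fixing any two arguments yields a bijection in the remaining argument), such that T satisfies (III.i) and (III.ii), S satisfies (vII), (vIII.i) and (vIII.ii), and the pair satisfies the mixed axioms (m.i) T (S a b c) c d = S (T a b (S b c d)) (S b c d) d and (m.ii) T a b (S b c d) = S a (S a b c) (T (S a b c) c d) for all a, b, c, d ∈ Fin 3, equals 24. -/

import Mathlib

def IsLatinCube {n : ℕ} (T : Fin n → Fin n → Fin n → Fin n) : Prop :=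
  (∀ a b, Function.Bijective (fun c => T a b c)) ∧
  (∀ a c, Function.Bijective (fun b => T a b c)) ∧
  (∀ b c, Function.Bijective (fun a => T a b c))

def IsVirtualTribracket {n : ℕ}
    (T S : Fin n → Fin n → Fin n → Fin n) : Prop :=
  IsLatinCube T ∧ IsLatinCube S ∧
  ∀ a b c d : Fin n,
    T a b (T b c d) = T a (T a b c) (T (T a b c) c d) ∧
    T (T a b c) c d = T (T a b (T b c d)) (T b c d) d ∧
    S a (S a b c) c = b ∧
    S a b (S b c d) = S a (S a b c) (S (S a b c) c d) ∧
    S (S a b c) c d = S (S a b (S b c d)) (S b c d) d ∧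
    T (S a b c) c d = S (T a b (S b c d)) (S b c d) d ∧
    T a b (S b c d) = S a (S a b c) (T (S a b c) c d)

namespace VT3

open Fin.CommRing

lemma sub_ne : ∀ u v : Fin 3, u ≠ v → u - v ≠ 0 := by decide

lemma coeff_zero : ∀ k m : Fin 3, (∀ x, k * x + m ≠ 0) → k = 0 := by decide

lemma bij_affine (f : Fin 3 → Fin 3) (hf : Function.Bijective f) (x : Fin 3) :
    f x = (f 1 - f 0) * x + f 0 := by
  have h01 : f 0 ≠ f 1 := hf.injective.ne (by decide)
  have h02 : f 0 ≠ f 2 := hf.injective.ne (by decide)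
  have h12 : f 1 ≠ f 2 := hf.injective.ne (by decide)
  have k0 : ∀ u v : Fin 3, u ≠ v → u = (v - u) * 0 + u := by decide
  have k1 : ∀ u v : Fin 3, u ≠ v → v = (v - u) * 1 + u := by decide
  have k2 : ∀ u v w : Fin 3, u ≠ v → u ≠ w → v ≠ w → w = (v - u) * 2 + u := by decide
  rcases (show x = 0 ∨ x = 1 ∨ x = 2 by omega) with rfl | rfl | rfl
  · exact k0 _ _ h01
  · exact k1 _ _ h01
  · exact k2 _ _ _ h01 h02 h12

lemma lc_affine {T : Fin 3 → Fin 3 → Fin 3 → Fin 3} (h : IsLatinCube T) (a b c : Fin 3) :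
    T a b c = (T 1 0 0 - T 0 0 0) * a + (T 0 1 0 - T 0 0 0) * b
      + (T 0 0 1 - T 0 0 0) * c + T 0 0 0 := by
  obtain ⟨h1, h2, h3⟩ := h
  have Hc : ∀ a b c, T a b c = (T a b 1 - T a b 0) * c + T a b 0 :=
    fun a b c => bij_affine _ (h1 a b) c
  have Hb : ∀ a c b, T a b c = (T a 1 c - T a 0 c) * b + T a 0 c :=
    fun a c b => bij_affine _ (h2 a c) b
  have Ha : ∀ b c a, T a b c = (T 1 b c - T 0 b c) * a + T 0 b c :=
    fun b c a => bij_affine _ (h3 b c) a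
  have n1 : ∀ a b, T a b 1 - T a b 0 ≠ 0 :=
    fun a b => sub_ne _ _ ((h1 a b).injective.ne (by decide))
  have n2 : ∀ a c, T a 1 c - T a 0 c ≠ 0 :=
    fun a c => sub_ne _ _ ((h2 a c).injective.ne (by decide))
  -- γ independent of b
  have g1 : ∀ a b, T a b 1 - T a b 0 = T a 0 1 - T a 0 0 := by
    intro a b
    have hz : (T a 1 1 - T a 0 1) - (T a 1 0 - T a 0 0) = 0 := by
      apply coeff_zero _ (T a 0 1 - T a 0 0)
      intro x
      have e : ((T a 1 1 - T a 0 1) - (T a 1 0 - T a 0 0)) * x + (T a 0 1 - T a 0 0)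
          = T a x 1 - T a x 0 := by
        rw [Hb a 1 x, Hb a 0 x]; ring
      rw [e]; exact n1 a x
    have e2 : T a b 1 - T a b 0
        = ((T a 1 1 - T a 0 1) - (T a 1 0 - T a 0 0)) * b + (T a 0 1 - T a 0 0) := by
      rw [Hb a 1 b, Hb a 0 b]; ring
    rw [e2, hz]; ring
  -- γ independent of a
  have g2 : ∀ a, T a 0 1 - T a 0 0 = T 0 0 1 - T 0 0 0 := by
    intro a
    have hz : (T 1 0 1 - T 0 0 1) - (T 1 0 0 - T 0 0 0) = 0 := by
      apply coeff_zero _ (T 0 0 1 - T 0 0 0)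
      intro x
      have e : ((T 1 0 1 - T 0 0 1) - (T 1 0 0 - T 0 0 0)) * x + (T 0 0 1 - T 0 0 0)
          = T x 0 1 - T x 0 0 := by
        rw [Ha 0 1 x, Ha 0 0 x]; ring
      rw [e]; exact n1 x 0
    have e2 : T a 0 1 - T a 0 0
        = ((T 1 0 1 - T 0 0 1) - (T 1 0 0 - T 0 0 0)) * a + (T 0 0 1 - T 0 0 0) := by
      rw [Ha 0 1 a, Ha 0 0 a]; ring
    rw [e2, hz]; ring
  have gconst : ∀ a b, T a b 1 - T a b 0 = T 0 0 1 - T 0 0 0 :=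
    fun a b => (g1 a b).trans (g2 a)
  -- β independent of a
  have b2 : ∀ a, T a 1 0 - T a 0 0 = T 0 1 0 - T 0 0 0 := by
    intro a
    have hz : (T 1 1 0 - T 0 1 0) - (T 1 0 0 - T 0 0 0) = 0 := by
      apply coeff_zero _ (T 0 1 0 - T 0 0 0)
      intro x
      have e : ((T 1 1 0 - T 0 1 0) - (T 1 0 0 - T 0 0 0)) * x + (T 0 1 0 - T 0 0 0)
          = T x 1 0 - T x 0 0 := by
        rw [Ha 1 0 x, Ha 0 0 x]; ring
      rw [e]; exact n2 x 0
    have e2 : T a 1 0 - T a 0 0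
        = ((T 1 1 0 - T 0 1 0) - (T 1 0 0 - T 0 0 0)) * a + (T 0 1 0 - T 0 0 0) := by
      rw [Ha 1 0 a, Ha 0 0 a]; ring
    rw [e2, hz]; ring
  rw [Hc a b c, gconst a b, Hb a 0 b, b2 a, Ha 0 0 a]; ring

abbrev F4 := Fin 3 × Fin 3 × Fin 3 × Fin 3

def aff (p : F4) : Fin 3 → Fin 3 → Fin 3 → Fin 3 :=
  fun a b c => p.1 * a + p.2.1 * b + p.2.2.1 * c + p.2.2.2

def key (T : Fin 3 → Fin 3 → Fin 3 → Fin 3) : F4 :=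
  (T 1 0 0 - T 0 0 0, T 0 1 0 - T 0 0 0, T 0 0 1 - T 0 0 0, T 0 0 0)

lemma key_aff {T : Fin 3 → Fin 3 → Fin 3 → Fin 3} (h : IsLatinCube T) : T = aff (key T) := by
  funext a b c
  simpa [aff, key] using lc_affine h a b c

lemma bij_linear : ∀ k m : Fin 3, k ≠ 0 → Function.Bijective (fun x : Fin 3 => k * x + m) := by
  decide

lemma aff_latin {p : F4} (h1 : p.1 ≠ 0) (h2 : p.2.1 ≠ 0) (h3 : p.2.2.1 ≠ 0) :
    IsLatinCube (aff p) := by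
  obtain ⟨α, β, γ, δ⟩ := p
  refine ⟨fun a b => ?_, fun a c => ?_, fun b c => ?_⟩
  · have e : (fun c => aff (α, β, γ, δ) a b c) = fun c => γ * c + (α * a + β * b + δ) := by
      funext c; simp only [aff]; ring
    rw [e]; exact bij_linear _ _ h3
  · have e : (fun b => aff (α, β, γ, δ) a b c) = fun b => β * b + (α * a + γ * c + δ) := by
      funext b; simp only [aff]; ring
    rw [e]; exact bij_linear _ _ h2
  · have e : (fun a => aff (α, β, γ, δ) a b c) = fun a => α * a + (β * b + γ * c + δ) := by
      funext a; simp only [aff]; ring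
    rw [e]; exact bij_linear _ _ h1

def Q (p q : F4) : Prop :=
  p.1 ≠ 0 ∧ p.2.1 ≠ 0 ∧ p.2.2.1 ≠ 0 ∧ q.1 ≠ 0 ∧ q.2.1 ≠ 0 ∧ q.2.2.1 ≠ 0 ∧
  ∀ a b c d : Fin 3,
    aff p a b (aff p b c d) = aff p a (aff p a b c) (aff p (aff p a b c) c d) ∧
    aff p (aff p a b c) c d = aff p (aff p a b (aff p b c d)) (aff p b c d) d ∧
    aff q a (aff q a b c) c = b ∧
    aff q a b (aff q b c d) = aff q a (aff q a b c) (aff q (aff q a b c) c d) ∧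
    aff q (aff q a b c) c d = aff q (aff q a b (aff q b c d)) (aff q b c d) d ∧
    aff p (aff q a b c) c d = aff q (aff p a b (aff q b c d)) (aff q b c d) d ∧
    aff p a b (aff q b c d) = aff q a (aff q a b c) (aff p (aff q a b c) c d)

instance : ∀ p q, Decidable (Q p q) := fun p q => by unfold Q; infer_instance

def myEquiv :
    {TS : (Fin 3 → Fin 3 → Fin 3 → Fin 3) × (Fin 3 → Fin 3 → Fin 3 → Fin 3) //
      IsVirtualTribracket TS.1 TS.2} ≃ {pq : F4 × F4 // Q pq.1 pq.2} where
  toFun x := ⟨(key x.1.1, key x.1.2), by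
    obtain ⟨⟨T, S⟩, hT, hS, hax⟩ := x
    show Q (key T) (key S)
    have eT : T = aff (key T) := key_aff hT
    have eS : S = aff (key S) := key_aff hS
    refine ⟨?_, ?_, ?_, ?_, ?_, ?_, ?_⟩
    · exact sub_ne _ _ ((hT.2.2 0 0).injective.ne (by decide))
    · exact sub_ne _ _ ((hT.2.1 0 0).injective.ne (by decide))
    · exact sub_ne _ _ ((hT.1 0 0).injective.ne (by decide))
    · exact sub_ne _ _ ((hS.2.2 0 0).injective.ne (by decide))
    · exact sub_ne _ _ ((hS.2.1 0 0).injective.ne (by decide))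
    · exact sub_ne _ _ ((hS.1 0 0).injective.ne (by decide))
    · intro a b c d
      rw [← eT, ← eS]
      exact hax a b c d⟩
  invFun y := ⟨(aff y.1.1, aff y.1.2), by
    obtain ⟨⟨p, q⟩, h1, h2, h3, h4, h5, h6, hax⟩ := y
    exact ⟨aff_latin h1 h2 h3, aff_latin h4 h5 h6, hax⟩⟩
  left_inv x := by
    obtain ⟨⟨T, S⟩, hT, hS, hax⟩ := x
    apply Subtype.ext
    show (aff (key T), aff (key S)) = (T, S)
    rw [← key_aff hT, ← key_aff hS]
  right_inv y := by
    obtain ⟨⟨⟨α1, β1, γ1, δ1⟩, ⟨α2, β2, γ2, δ2⟩⟩, h⟩ := y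
    apply Subtype.ext
    show (key (aff (α1, β1, γ1, δ1)), key (aff (α2, β2, γ2, δ2))) = _
    simp only [key, aff, Prod.mk.injEq]
    refine ⟨⟨by ring, by ring, by ring, by ring⟩, by ring, by ring, by ring, by ring⟩

end VT3

set_option maxRecDepth 100000 in
set_option maxHeartbeats 4000000 in
theorem card_virtual_tribrackets_order_three :
    Nat.card {TS : (Fin 3 → Fin 3 → Fin 3 → Fin 3) × (Fin 3 → Fin 3 → Fin 3 → Fin 3) //
      IsVirtualTribracket TS.1 TS.2} = 24 := by
  rw [Nat.card_congr VT3.myEquiv, Nat.card_eq_fintype_card]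
  decide
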